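/- arXiv:1107.4184 — 2 statements merged into one kernel-verified Lean document; each statement's English description precedes it below -/
import Mathlib

section
/- Let λ, β ∈ ℝ, T > 0, and a₀, a₁ ∈ ℝ. Let ā : [0, T] → ℝ be differentiable with ā′(t) = −λ ā(t) + β ā(t) − ā(t)³ on [0, T] and ā(0) = a₀. Then there exists a constant C ≥ 0 (depending only on λ, β, T, a₀, a₁) such that for every ν ∈ (0, 1] and every twice-differentiable a : [0, T] → ℝ satisfying ν a″(t) + a′(t) = −λ a(t) + β a(t) − a(t)³ on [0, T] with a(0) = a₀ and a′(0) = a₁, one has sup_{t ∈ [0, T]} |a(t) − ā(t)| ≤ C·ν. -/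
open Set Real

/-- If `|w'| ≤ g'` on `[0,T]` then `|w t - w 0| ≤ g t - g 0`. -/
lemma abs_sub_le_of_abs_deriv_le {T : ℝ} {w g w' g' : ℝ → ℝ}
    (hw : ∀ t ∈ Icc (0:ℝ) T, HasDerivAt w (w' t) t)
    (hg : ∀ t ∈ Icc (0:ℝ) T, HasDerivAt g (g' t) t)
    (hb : ∀ t ∈ Icc (0:ℝ) T, |w' t| ≤ g' t) :
    ∀ t ∈ Icc (0:ℝ) T, |w t - w 0| ≤ g t - g 0 := by
  intro t ht
  have h0 : (0:ℝ) ∈ Icc (0:ℝ) T := ⟨le_refl _, ht.1.trans ht.2⟩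
  have hint : Ioo (0:ℝ) T ⊆ Icc 0 T := Ioo_subset_Icc_self
  have mono1 : MonotoneOn (fun s => g s - w s) (Icc 0 T) := by
    apply monotoneOn_of_deriv_nonneg (convex_Icc _ _)
    · exact fun s hs => ((hg s hs).sub (hw s hs)).continuousAt.continuousWithinAt
    · rw [interior_Icc]
      exact fun s hs => ((hg s (hint hs)).sub (hw s (hint hs))).differentiableAt.differentiableWithinAt
    · rw [interior_Icc]
      intro s hs
      rw [show (fun s => g s - w s) = g - w from rfl, ((hg s (hint hs)).sub (hw s (hint hs))).deriv]
      have := hb s (hint hs)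
      have := abs_le.mp this
      linarith [this.2]
  have mono2 : MonotoneOn (fun s => g s + w s) (Icc 0 T) := by
    apply monotoneOn_of_deriv_nonneg (convex_Icc _ _)
    · exact fun s hs => ((hg s hs).add (hw s hs)).continuousAt.continuousWithinAt
    · rw [interior_Icc]
      exact fun s hs => ((hg s (hint hs)).add (hw s (hint hs))).differentiableAt.differentiableWithinAt
    · rw [interior_Icc]
      intro s hs
      rw [show (fun s => g s + w s) = g + w from rfl, ((hg s (hint hs)).add (hw s (hint hs))).deriv]
      have := abs_le.mp (hb s (hint hs))
      linarith [this.1]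
  have h1 := mono1 h0 ht ht.1
  have h2 := mono2 h0 ht ht.1
  simp only at h1 h2
  rw [abs_le]
  constructor <;> linarith

/-- If `E' ≤ 0` on `[0,T]` then `E t ≤ E 0`. -/
lemma le_initial_of_deriv_nonpos {T : ℝ} {E E' : ℝ → ℝ}
    (hE : ∀ t ∈ Icc (0:ℝ) T, HasDerivAt E (E' t) t)
    (hE' : ∀ t ∈ Icc (0:ℝ) T, E' t ≤ 0) :
    ∀ t ∈ Icc (0:ℝ) T, E t ≤ E 0 := by
  intro t ht
  have h0 : (0:ℝ) ∈ Icc (0:ℝ) T := ⟨le_refl _, ht.1.trans ht.2⟩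
  have hint : Ioo (0:ℝ) T ⊆ Icc 0 T := Ioo_subset_Icc_self
  have anti : AntitoneOn E (Icc 0 T) := by
    apply antitoneOn_of_deriv_nonpos (convex_Icc _ _)
    · exact fun s hs => (hE s hs).continuousAt.continuousWithinAt
    · rw [interior_Icc]
      exact fun s hs => (hE s (hint hs)).differentiableAt.differentiableWithinAt
    · rw [interior_Icc]
      intro s hs
      rw [(hE s (hint hs)).deriv]
      exact hE' s (hint hs)
  exact anti h0 ht ht.1

set_option maxHeartbeats 2000000 in
/-- **Deterministic single-mode averaging with error `O(ν)`.**
Let `λ, β ∈ ℝ`, `T > 0`, `a₀ a₁ ∈ ℝ`, and let `ā` solve the limit equation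
`ā' = -λ ā + β ā - ā³` on `[0, T]` with `ā 0 = a₀`.  Then there is `C ≥ 0`
(depending only on `λ, β, T, a₀, a₁`) such that for every `ν ∈ (0, 1]` and
every twice differentiable `a` with `ν a'' + a' = -λ a + β a - a³` on `[0, T]`,
`a 0 = a₀` and `a' 0 = a₁`, one has `sup_{[0,T]} |a - ā| ≤ C ν`. -/
theorem singular_limit_deterministic
    (lam β T a₀ a₁ : ℝ) (hT : 0 < T) (abar : ℝ → ℝ)
    (habar : ∀ t ∈ Icc (0:ℝ) T,
      HasDerivAt abar (-lam * abar t + β * abar t - (abar t) ^ 3) t)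
    (habar0 : abar 0 = a₀) :
    ∃ C : ℝ, 0 ≤ C ∧
      ∀ ν ∈ Ioc (0:ℝ) 1, ∀ a a' a'' : ℝ → ℝ,
        (∀ t ∈ Icc (0:ℝ) T, HasDerivAt a (a' t) t) →
        (∀ t ∈ Icc (0:ℝ) T, HasDerivAt a' (a'' t) t) →
        (∀ t ∈ Icc (0:ℝ) T,
          ν * a'' t + a' t = -lam * a t + β * a t - (a t) ^ 3) →
        a 0 = a₀ → a' 0 = a₁ →
        ∀ t ∈ Icc (0:ℝ) T, |a t - abar t| ≤ C * ν := by
  -- bound on abar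
  obtain ⟨x₀, hx₀, hmax⟩ := isCompact_Icc.exists_isMaxOn (s := Icc (0:ℝ) T)
    (f := fun t => |abar t|) ⟨0, le_refl _, hT.le⟩
    (fun t ht => ((habar t ht).continuousAt.continuousWithinAt).abs)
  obtain ⟨Mb, hMbdef⟩ : ∃ x : ℝ, x = max (|abar x₀|) 0 := ⟨_, rfl⟩
  have hMb : ∀ t ∈ Icc (0:ℝ) T, |abar t| ≤ Mb := by
    intro t ht
    rw [hMbdef]
    exact (hmax ht).trans (le_max_left _ _)
  have hMb0 : 0 ≤ Mb := hMbdef ▸ le_max_right _ _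
  -- constants
  obtain ⟨E₀, hE₀def⟩ : ∃ x : ℝ, x = a₁^2/2 + ((lam-β)*a₀^2/2 + a₀^4/4) := ⟨_, rfl⟩
  obtain ⟨c, hcdef⟩ : ∃ x : ℝ, x = (lam-β)^2/2 := ⟨_, rfl⟩
  obtain ⟨M, hMdef⟩ : ∃ x : ℝ, x = 1 + 8*(max (E₀ + c) 0) := ⟨_, rfl⟩
  have hM1 : (1:ℝ) ≤ M := by
    have h0 : (0:ℝ) ≤ max (E₀ + c) 0 := le_max_right _ _
    rw [hMdef]; linarith
  have hM0 : (0:ℝ) ≤ M := by linarith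
  obtain ⟨K, hKdef⟩ : ∃ x : ℝ, x = |lam| * M + |β| * M + M^3 := ⟨_, rfl⟩
  have hK0 : 0 ≤ K := by
    rw [hKdef]
    have h1 := mul_nonneg (abs_nonneg lam) hM0
    have h2 := mul_nonneg (abs_nonneg β) hM0
    have h3 := pow_nonneg hM0 3
    linarith
  obtain ⟨B, hBdef⟩ : ∃ x : ℝ, x = |a₁| + K := ⟨_, rfl⟩
  have hB0 : 0 ≤ B := by rw [hBdef]; linarith [abs_nonneg a₁]
  obtain ⟨R, hRdef⟩ : ∃ x : ℝ, x = max M Mb := ⟨_, rfl⟩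
  have hR0 : (0:ℝ) ≤ R := by rw [hRdef]; exact hM0.trans (le_max_left _ _)
  obtain ⟨L, hLdef⟩ : ∃ x : ℝ, x = |lam| + |β| + 3*R^2 + 1 := ⟨_, rfl⟩
  have hL1 : (1:ℝ) ≤ L := by
    rw [hLdef]
    have h1 := abs_nonneg lam
    have h2 := abs_nonneg β
    have h3 := sq_nonneg R
    linarith
  have hL0 : (0:ℝ) < L := by linarith
  have hC0 : 0 ≤ (|a₁| + B) * Real.exp (L*T) + B := by
    have h1 := Real.exp_pos (L*T)
    have h2 := abs_nonneg a₁
    nlinarith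
  refine ⟨(|a₁| + B) * Real.exp (L*T) + B, hC0, ?_⟩
  rintro ν ⟨hν0, hν1⟩ a a' a'' ha ha' heq ha0 ha'0
  -- Lipschitz property of the nonlinearity on [-R, R]
  have hLip : ∀ x y : ℝ, |x| ≤ R → |y| ≤ R →
      |(-lam*x + β*x - x^3) - (-lam*y + β*y - y^3)| ≤ L * |x - y| := by
    intro x y hx hy
    have hfact : (-lam*x + β*x - x^3) - (-lam*y + β*y - y^3)
        = (x - y) * ((β - lam) - (x^2 + x*y + y^2)) := by ring
    rw [hfact, abs_mul]
    have hx2 : x^2 ≤ R^2 := by obtain ⟨h1, h2⟩ := abs_le.mp hx; exact sq_le_sq' h1 h2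
    have hy2 : y^2 ≤ R^2 := by obtain ⟨h1, h2⟩ := abs_le.mp hy; exact sq_le_sq' h1 h2
    have hxy : |x*y| ≤ R^2 := by
      rw [abs_mul, pow_two]
      exact mul_le_mul hx hy (abs_nonneg _) hR0
    have hxy' := abs_le.mp hxy
    have hbound : |β - lam - (x^2 + x*y + y^2)| ≤ L := by
      rw [abs_le, hLdef]
      have hq1 := neg_abs_le (β - lam)
      have hq2 := le_abs_self (β - lam)
      have hb2 : |β - lam| ≤ |β| + |lam| := abs_sub _ _
      have hq3 := abs_nonneg lam
      have hq4 := abs_nonneg β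
      have hq5 := sq_nonneg x
      have hq6 := sq_nonneg y
      constructor <;> linarith [hxy'.1, hxy'.2]
    calc |x - y| * |β - lam - (x^2 + x*y + y^2)| ≤ |x - y| * L :=
          mul_le_mul_of_nonneg_left hbound (abs_nonneg _)
      _ = L * |x - y| := mul_comm _ _
  -- Energy estimate: uniform bound on a
  have hEderiv : ∀ t ∈ Icc (0:ℝ) T, HasDerivAt
      (fun s => ν*(a' s)^2/2 + ((lam-β)*(a s)^2/2 + (a s)^4/4)) (-(a' t)^2) t := by
    intro t ht
    have h1 := ((((ha' t ht).pow 2).const_mul ν).div_const 2).add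
        (((((ha t ht).pow 2).const_mul (lam-β)).div_const 2).add
          (((ha t ht).pow 4).div_const 4))
    norm_num at h1
    refine h1.congr_deriv ?_
    linear_combination (a' t) * (heq t ht)
  have hEle := le_initial_of_deriv_nonpos hEderiv (fun t _ => neg_nonpos.mpr (sq_nonneg _))
  have haM : ∀ t ∈ Icc (0:ℝ) T, |a t| ≤ M := by
    intro t ht
    have h1 := hEle t ht
    rw [ha0, ha'0] at h1
    have h2 : (a t)^4/8 ≤ E₀ + c := by
      have hν : 0 ≤ ν*(a' t)^2/2 := by positivity
      have hν2 : ν*a₁^2/2 ≤ a₁^2/2 := by nlinarith [sq_nonneg a₁]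
      rw [hE₀def, hcdef]
      nlinarith [sq_nonneg ((a t)^2 + 2*(lam-β))]
    rcases le_or_gt (|a t|) 1 with h | h
    · linarith
    · have h3 : |a t|^1 ≤ |a t|^4 := pow_le_pow_right₀ h.le (by norm_num)
      have h4 : |a t|^4 = (a t)^4 := by rw [← abs_pow]; exact abs_of_nonneg (by positivity)
      have h5 : E₀ + c ≤ max (E₀ + c) 0 := le_max_left _ _
      rw [hMdef]
      rw [pow_one] at h3
      linarith
  -- bound on the nonlinearity along a
  have hfK : ∀ t ∈ Icc (0:ℝ) T, |(-lam*(a t) + β*(a t) - (a t)^3)| ≤ K := by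
    intro t ht
    have hx := haM t ht
    have h1 : -lam*(a t) + β*(a t) - (a t)^3 = (-lam)*(a t) + β*(a t) + (-(a t)^3) := by ring
    rw [h1]
    calc |(-lam)*(a t) + β*(a t) + (-(a t)^3)|
        ≤ |(-lam)*(a t) + β*(a t)| + |(-(a t)^3)| := abs_add_le _ _
      _ ≤ (|(-lam)*(a t)| + |β*(a t)|) + |(a t)^3| := by
          rw [abs_neg]; exact add_le_add (abs_add_le _ _) le_rfl
      _ = |lam| * |a t| + |β| * |a t| + |a t|^3 := by rw [abs_mul, abs_mul, abs_neg, abs_pow]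
      _ ≤ |lam| * M + |β| * M + M^3 := by gcongr <;> exact hx
      _ = K := hKdef.symm
  -- uniform bound on a'
  have ha'B : ∀ t ∈ Icc (0:ℝ) T, |a' t| ≤ B := by
    intro t ht
    have hw : ∀ s ∈ Icc (0:ℝ) T, HasDerivAt (fun u => Real.exp (u/ν) * a' u)
        (Real.exp (s/ν) * (1/ν) * a' s + Real.exp (s/ν) * a'' s) s := by
      intro s hs
      exact (((hasDerivAt_id s).div_const ν).exp).mul (ha' s hs)
    have hg : ∀ s ∈ Icc (0:ℝ) T, HasDerivAt (fun u => K * Real.exp (u/ν))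
        (K * (Real.exp (s/ν) * (1/ν))) s := by
      intro s hs
      exact (((hasDerivAt_id s).div_const ν).exp).const_mul K
    have hb : ∀ s ∈ Icc (0:ℝ) T, |Real.exp (s/ν) * (1/ν) * a' s + Real.exp (s/ν) * a'' s|
        ≤ K * (Real.exp (s/ν) * (1/ν)) := by
      intro s hs
      have h1 : Real.exp (s/ν) * (1/ν) * a' s + Real.exp (s/ν) * a'' s
          = (Real.exp (s/ν) / ν) * (a' s + ν * a'' s) := by
        field_simp
      rw [h1, abs_mul]
      have h2 : a' s + ν * a'' s = -lam*(a s) + β*(a s) - (a s)^3 := by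
        linarith [heq s hs]
      rw [h2]
      have h3 : |Real.exp (s/ν) / ν| = Real.exp (s/ν) * (1/ν) := by
        rw [abs_of_pos (by positivity)]; ring
      rw [h3]
      have h5 : (0:ℝ) ≤ Real.exp (s/ν) * (1/ν) := by positivity
      calc Real.exp (s/ν) * (1/ν) * |(-lam*(a s) + β*(a s) - (a s)^3)|
          ≤ Real.exp (s/ν) * (1/ν) * K := mul_le_mul_of_nonneg_left (hfK s hs) h5
        _ = K * (Real.exp (s/ν) * (1/ν)) := mul_comm _ _
    have hkey := abs_sub_le_of_abs_deriv_le hw hg hb t ht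
    simp only [zero_div, Real.exp_zero, one_mul, mul_one, ha'0] at hkey
    have hexp1 : (1:ℝ) ≤ Real.exp (t/ν) := by
      rw [Real.one_le_exp_iff]; exact div_nonneg ht.1 hν0.le
    have h4 := abs_le.mp hkey
    have h5 := abs_le.mp (le_refl |a₁|)
    have hwt : Real.exp (t/ν) * |a' t| ≤ (|a₁| + K) * Real.exp (t/ν) := by
      rw [← abs_of_pos (Real.exp_pos (t/ν)), ← abs_mul, abs_of_pos (Real.exp_pos (t/ν))]
      rw [abs_le]
      constructor <;> nlinarith [neg_abs_le a₁, le_abs_self a₁, abs_nonneg a₁]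
    have h6 := (mul_le_mul_iff_of_pos_left (Real.exp_pos (t/ν))).mp (hwt.trans_eq (mul_comm _ _))
    rw [hBdef]
    exact h6
  -- the corrected error function v = a + ν a' - abar
  have hv : ∀ s ∈ Icc (0:ℝ) T, HasDerivAt (fun u => a u + ν * a' u - abar u)
      ((-lam*(a s) + β*(a s) - (a s)^3) - (-lam*(abar s) + β*(abar s) - (abar s)^3)) s := by
    intro s hs
    have h1 : HasDerivAt (fun u => a u + ν * a' u - abar u)
        (a' s + ν * a'' s - (-lam * abar s + β * abar s - (abar s)^3)) s :=
      ((ha s hs).add ((ha' s hs).const_mul ν)).sub (habar s hs)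
    convert h1 using 1
    linarith [heq s hs]
  intro t ht
  have hgron := norm_le_gronwallBound_of_norm_deriv_right_le
    (f := fun u => a u + ν * a' u - abar u)
    (f' := fun s => (-lam*(a s) + β*(a s) - (a s)^3)
        - (-lam*(abar s) + β*(abar s) - (abar s)^3))
    (δ := ν * |a₁|) (K := L) (ε := L * (ν * B)) (a := 0) (b := T)
    (fun s hs => (hv s hs).continuousAt.continuousWithinAt)
    (fun s hs => (hv s (Ico_subset_Icc_self hs)).hasDerivWithinAt)
    (by
      simp only [Real.norm_eq_abs, ha0, habar0, ha'0]
      rw [show a₀ + ν * a₁ - a₀ = ν * a₁ by ring, abs_mul, abs_of_pos hν0])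
    (by
      intro s hs
      have hs' := Ico_subset_Icc_self hs
      have hxa : |a s| ≤ R := (haM s hs').trans (hRdef ▸ le_max_left _ _)
      have hxb : |abar s| ≤ R := (hMb s hs').trans (hRdef ▸ le_max_right _ _)
      have h1 := hLip _ _ hxa hxb
      have h2 : |a s - abar s| ≤ |a s + ν * a' s - abar s| + ν * B := by
        have h3 : a s - abar s = (a s + ν * a' s - abar s) - ν * a' s := by ring
        rw [h3]
        calc |(a s + ν * a' s - abar s) - ν * a' s|
            ≤ |a s + ν * a' s - abar s| + |ν * a' s| := abs_sub _ _
          _ ≤ |a s + ν * a' s - abar s| + ν * B := by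
              rw [abs_mul, abs_of_pos hν0]
              have h4 := ha'B s hs'
              nlinarith
      simp only [Real.norm_eq_abs]
      calc |(-lam*(a s) + β*(a s) - (a s)^3) - (-lam*(abar s) + β*(abar s) - (abar s)^3)|
          ≤ L * |a s - abar s| := h1
        _ ≤ L * (|a s + ν * a' s - abar s| + ν * B) :=
            mul_le_mul_of_nonneg_left h2 hL0.le
        _ = L * |a s + ν * a' s - abar s| + L * (ν * B) := by ring)
    t ht
  -- unfold the Gronwall bound
  have hgb : gronwallBound (ν * |a₁|) L (L * (ν * B)) (t - 0)
      ≤ ν * ((|a₁| + B) * Real.exp (L * T)) := by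
    rw [gronwallBound_of_K_ne_0 hL0.ne']
    simp only [sub_zero]
    have hdiv : L * (ν * B) / L = ν * B := by field_simp
    rw [hdiv]
    have hexp : Real.exp (L * t) ≤ Real.exp (L * T) :=
      Real.exp_le_exp.mpr (by nlinarith [ht.2])
    have hexp1 : (1:ℝ) ≤ Real.exp (L * t) := Real.one_le_exp_iff.mpr (by nlinarith [ht.1])
    have hA : 0 ≤ ν * |a₁| := by positivity
    have hBν : 0 ≤ ν * B := mul_nonneg hν0.le hB0
    have h1 : ν * |a₁| * Real.exp (L*t) ≤ ν * |a₁| * Real.exp (L*T) :=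
      mul_le_mul_of_nonneg_left hexp hA
    have h2 : ν * B * (Real.exp (L*t) - 1) ≤ ν * B * Real.exp (L*T) :=
      mul_le_mul_of_nonneg_left (by linarith) hBν
    nlinarith
  have hvt : |a t + ν * a' t - abar t| ≤ ν * ((|a₁| + B) * Real.exp (L * T)) := by
    have h7 := hgron
    rw [Real.norm_eq_abs] at h7
    exact h7.trans hgb
  have hfin : a t - abar t = (a t + ν * a' t - abar t) - ν * a' t := by ring
  rw [hfin]
  calc |(a t + ν * a' t - abar t) - ν * a' t|
      ≤ |a t + ν * a' t - abar t| + |ν * a' t| := abs_sub _ _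
    _ ≤ ν * ((|a₁| + B) * Real.exp (L * T)) + ν * B := by
        rw [abs_mul, abs_of_pos hν0]
        have h8 := ha'B t ht
        nlinarith
    _ = ((|a₁| + B) * Real.exp (L * T) + B) * ν := by ring
end

section
/- Let E₀, E₁, E be real Banach spaces, i : E₁ →L E and j : E →L E₀ injective continuous linear maps (continuous embeddings E₁ ⊂ E ⊂ E₀) such that j ∘ i : E₁ →L E₀ is a compact operator, and suppose there exist θ ∈ (0, 1) and M ≥ 0 with ‖i u‖_E ≤ M·‖j(i u)‖_{E₀}^{1−θ}·‖u‖_{E₁}^{θ} for all u ∈ E₁. Let T > 0 and p₀, p₁ ∈ [1, ∞] satisfy 1 − θ > (1 − θ)/p₀ + θ/p₁. Let R ≥ 0 and let V be a set of functions v : [0, T] → E₁ such that for every v ∈ V: (a) v ∈ L^{p₁}(0, T; E₁) with ‖v‖_{L^{p₁}(0,T;E₁)} ≤ R, and (b) there exists w′ ∈ L^{p₀}(0, T; E₀) with ‖w′‖_{L^{p₀}(0,T;E₀)} ≤ R and j(i(v(t))) = j(i(v(0))) + ∫₀ᵗ w′(s) ds for all t ∈ [0, T]. Then the set {t ↦ i(v(t))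 : v ∈ V} is relatively compact (totally bounded) in C([0, T]; E) with the supremum norm. -/
open MeasureTheory Set Filter UniformConvergence
open scoped ENNReal NNReal Uniformity

/-- If every element of `S` is `V`-close to a point of a totally bounded set (depending on
`V`), then `S` is totally bounded. -/
theorem totallyBounded_of_near {X : Type*} [UniformSpace X] {S : Set X}
    (h : ∀ V ∈ 𝓤 X, ∃ K : Set X, TotallyBounded K ∧ ∀ x ∈ S, ∃ y ∈ K, (x, y) ∈ V) :
    TotallyBounded S := by
  intro d hd
  obtain ⟨V, hV, hVd⟩ := comp_mem_uniformity_sets hd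
  obtain ⟨K, hK, hSK⟩ := h V hV
  obtain ⟨t, ht, hKt⟩ := hK V hV
  refine ⟨t, ht, fun x hx => ?_⟩
  obtain ⟨y, hyK, hxy⟩ := hSK x hx
  obtain ⟨z, hz⟩ := mem_iUnion₂.1 (hKt hyK)
  exact mem_iUnion₂.2 ⟨z, hz.1, hVd ⟨y, hxy, hz.2⟩⟩

/-- Functions factoring through a finite index set with values in a totally bounded set form a
totally bounded subset of `α →ᵤ E`. -/
theorem totallyBounded_uniformFun_comp {ι α E : Type*} [Finite ι] [UniformSpace E]
    (φ : α → ι) {A : Set E} (hA : TotallyBounded A) :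
    TotallyBounded {f : α →ᵤ E |
      ∃ F : ι → E, (∀ k, F k ∈ A) ∧ f = UniformFun.ofFun (fun t => F (φ t))} := by
  intro d hd
  obtain ⟨U, hU, hUd⟩ := (UniformFun.hasBasis_uniformity α E).mem_iff.1 hd
  obtain ⟨t, ht, hAt⟩ := hA U hU
  classical
  refine ⟨(fun G : ι → E => UniformFun.ofFun (fun x => G (φ x))) '' {G | ∀ k, G k ∈ t},
    Set.Finite.image _ (Set.Finite.pi' (fun _ => ht)), ?_⟩
  rintro f ⟨F, hF, rfl⟩
  have : ∀ k, ∃ y ∈ t, (F k, y) ∈ U := by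
    intro k
    obtain ⟨y, hy⟩ := mem_iUnion₂.1 (hAt (hF k))
    exact ⟨y, hy.1, hy.2⟩
  choose G hGt hGU using this
  refine mem_iUnion₂.2 ⟨_, ⟨G, hGt, rfl⟩, hUd fun x => hGU (φ x)⟩

/-- Interpolation + compactness: the image under `i` of a closed ball of `E₁` is totally
bounded in `E`. -/
theorem totallyBounded_image_interp
    {E₀ E E₁ : Type*}
    [NormedAddCommGroup E₀] [NormedSpace ℝ E₀]
    [NormedAddCommGroup E] [NormedSpace ℝ E]
    [NormedAddCommGroup E₁] [NormedSpace ℝ E₁]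
    (i : E₁ →L[ℝ] E) (j : E →L[ℝ] E₀)
    (hcompact : IsCompactOperator fun u : E₁ => j (i u))
    {θ M : ℝ} (hθ : θ ∈ Set.Ioo (0:ℝ) 1) (hM : 0 ≤ M)
    (hinterp : ∀ u : E₁, ‖i u‖ ≤ M * ‖j (i u)‖ ^ (1 - θ) * ‖u‖ ^ θ)
    {K : ℝ} (hK : 0 ≤ K) :
    TotallyBounded (i '' Metric.closedBall 0 K) := by
  obtain ⟨hθ0, hθ1⟩ := hθ
  have h1θ : (0:ℝ) < 1 - θ := by linarith
  set S := Metric.closedBall (0:E₁) K with hS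
  -- the image under j ∘ i is totally bounded
  have hjiS : TotallyBounded ((fun u : E₁ => j (i u)) '' S) := by
    have : IsCompactOperator ⇑((j.comp i).toLinearMap) := hcompact
    obtain ⟨Kc, hKc, hsub⟩ :=
      this.image_closedBall_subset_compact (𝕜₁ := ℝ) (𝕜₂ := ℝ) K
    exact TotallyBounded.subset hsub hKc.totallyBounded
  intro d hd
  obtain ⟨ε, hε, hεd⟩ := Metric.mem_uniformity_dist.1 hd
  -- choose η
  set D : ℝ := (M + 1) * (2 * K + 1) ^ θ with hD
  have hDpos : 0 < D := by
    apply mul_pos (by linarith)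
    exact Real.rpow_pos_of_pos (by linarith) θ
  set η : ℝ := (ε / D) ^ (1 - θ)⁻¹ with hη
  have hηpos : 0 < η := Real.rpow_pos_of_pos (div_pos hε hDpos) _
  have hηpow : η ^ (1 - θ) = ε / D := Real.rpow_inv_rpow (div_pos hε hDpos).le h1θ.ne'
  -- finite η-net inside the image
  obtain ⟨t, hts, htfin, htcov⟩ := (totallyBounded_iff_subset.1 hjiS)
    {p : E₀ × E₀ | dist p.1 p.2 < η} (Metric.dist_mem_uniformity hηpos)
  -- pick preimages
  have hpre : ∀ y ∈ t, ∃ u : E₁, u ∈ S ∧ j (i u) = y := by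
    intro y hy
    obtain ⟨u, huS, huy⟩ := hts hy
    exact ⟨u, huS, huy⟩
  choose pre hpreS hpreEq using hpre
  classical
  refine ⟨(fun y : E₀ => if hy : y ∈ t then i (pre y hy) else 0) '' t,
    htfin.image _, ?_⟩
  rintro x ⟨u, huS, rfl⟩
  obtain ⟨y, hyt⟩ := mem_iUnion₂.1 (htcov ⟨u, huS, rfl⟩)
  obtain ⟨hyt', hdy⟩ := hyt
  refine mem_iUnion₂.2 ⟨_, Set.mem_image_of_mem _ hyt', ?_⟩
  simp only [dif_pos hyt']
  apply hεd
  -- the interpolation estimate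
  set u' := pre y hyt'
  have hdist : dist (i u) (i u') = ‖i (u - u')‖ := by
    rw [dist_eq_norm, ← map_sub]
  have hju : ‖j (i (u - u'))‖ ≤ η := by
    have : j (i (u - u')) = j (i u) - y := by rw [map_sub, map_sub, hpreEq y hyt']
    rw [this, ← dist_eq_norm]
    exact le_of_lt hdy
  have hu : ‖u - u'‖ ≤ 2 * K + 1 := by
    have h1 : ‖u‖ ≤ K := by simpa [S, dist_eq_norm] using huS
    have h2 : ‖u'‖ ≤ K := by simpa [S, dist_eq_norm] using hpreS y hyt'
    calc ‖u - u'‖ ≤ ‖u‖ + ‖u'‖ := norm_sub_le _ _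
      _ ≤ 2 * K + 1 := by linarith
  calc dist (i u) (i u') = ‖i (u - u')‖ := hdist
    _ ≤ M * ‖j (i (u - u'))‖ ^ (1 - θ) * ‖u - u'‖ ^ θ := hinterp _
    _ ≤ M * η ^ (1 - θ) * (2 * K + 1) ^ θ := by
        apply mul_le_mul
        · exact mul_le_mul_of_nonneg_left
            (Real.rpow_le_rpow (norm_nonneg _) hju h1θ.le) hM
        · exact Real.rpow_le_rpow (norm_nonneg _) hu hθ0.le
        · exact Real.rpow_nonneg (norm_nonneg _) θ
        · exact mul_nonneg hM (Real.rpow_nonneg hηpos.le _)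
    _ < ε := by
        rw [hηpow]
        have h2K : (0:ℝ) < (2 * K + 1) ^ θ := Real.rpow_pos_of_pos (by linarith) θ
        rw [hD]
        calc M * (ε / ((M + 1) * (2 * K + 1) ^ θ)) * (2 * K + 1) ^ θ
            = ε * (M / (M + 1)) := by field_simp
          _ < ε * 1 := by
              apply mul_lt_mul_of_pos_left _ hε
              rw [div_lt_one (by linarith)]; linarith
          _ = ε := mul_one ε

theorem holder_of_deriv {E₀ : Type*} [NormedAddCommGroup E₀] [NormedSpace ℝ E₀]
    [CompleteSpace E₀]
    {T R : ℝ} (hR : 0 ≤ R) {p₀ : ℝ≥0∞} (hp₀ : 1 ≤ p₀)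
    (hα : 0 ≤ 1 - (p₀.toReal)⁻¹)
    {w' : ℝ → E₀} (hw : MemLp w' p₀ (volume.restrict (Icc 0 T)))
    (hwR : eLpNorm w' p₀ (volume.restrict (Icc 0 T)) ≤ ENNReal.ofReal R)
    {s t : ℝ} (hs : s ∈ Icc (0:ℝ) T) (ht : t ∈ Icc (0:ℝ) T) (hst : s ≤ t) :
    ‖∫ τ in s..t, w' τ‖ ≤ R * (t - s) ^ (1 - (p₀.toReal)⁻¹) := by
  have hIoc : Ioc s t ⊆ Icc (0:ℝ) T := fun x hx =>
    ⟨le_trans hs.1 hx.1.le, le_trans hx.2 ht.2⟩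
  have hle : volume.restrict (Ioc s t) ≤ volume.restrict (Icc (0:ℝ) T) :=
    Measure.restrict_mono hIoc le_rfl
  have hmeas : AEStronglyMeasurable w' (volume.restrict (Ioc s t)) :=
    hw.1.mono_measure hle
  have step1 : ‖∫ τ in s..t, w' τ‖ ≤ ∫ τ in Ioc s t, ‖w' τ‖ := by
    rw [intervalIntegral.integral_of_le hst]
    exact norm_integral_le_integral_norm _
  have step2 : ∫ τ in Ioc s t, ‖w' τ‖
      = (eLpNorm w' 1 (volume.restrict (Ioc s t))).toReal := by
    rw [eLpNorm_one_eq_lintegral_enorm]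
    exact integral_norm_eq_lintegral_enorm hmeas
  have step3 : eLpNorm w' 1 (volume.restrict (Ioc s t))
      ≤ ENNReal.ofReal R * ENNReal.ofReal (t - s) ^ (1 - (p₀.toReal)⁻¹) := by
    calc eLpNorm w' 1 (volume.restrict (Ioc s t))
        ≤ eLpNorm w' p₀ (volume.restrict (Ioc s t)) *
          (volume.restrict (Ioc s t)) Set.univ ^ (1 / (1:ℝ≥0∞).toReal - 1 / p₀.toReal) :=
          eLpNorm_le_eLpNorm_mul_rpow_measure_univ hp₀ hmeas
      _ ≤ ENNReal.ofReal R * ENNReal.ofReal (t - s) ^ (1 - (p₀.toReal)⁻¹) := by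
          apply mul_le_mul'
          · exact le_trans (eLpNorm_mono_measure w' hle) hwR
          · rw [Measure.restrict_apply_univ, Real.volume_Ioc]
            simp [one_div]
  have hfin : ENNReal.ofReal R * ENNReal.ofReal (t - s) ^ (1 - (p₀.toReal)⁻¹) ≠ ∞ := by
    exact ENNReal.mul_ne_top ENNReal.ofReal_ne_top
      (ENNReal.rpow_ne_top_of_nonneg hα ENNReal.ofReal_ne_top)
  calc ‖∫ τ in s..t, w' τ‖ ≤ (eLpNorm w' 1 (volume.restrict (Ioc s t))).toReal := by
        rw [← step2]; exact step1
    _ ≤ (ENNReal.ofReal R * ENNReal.ofReal (t - s) ^ (1 - (p₀.toReal)⁻¹)).toReal :=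
        ENNReal.toReal_mono hfin step3
    _ = R * (t - s) ^ (1 - (p₀.toReal)⁻¹) := by
        rw [ENNReal.toReal_mul, ← ENNReal.toReal_rpow, ENNReal.toReal_ofReal hR,
          ENNReal.toReal_ofReal (by linarith [hst] : (0:ℝ) ≤ t - s)]

theorem exists_good_point {E₁ : Type*} [NormedAddCommGroup E₁]
    {T R : ℝ} (hR : 0 ≤ R) {p₁ : ℝ≥0∞} (hp₁ : 1 ≤ p₁)
    {v : ℝ → E₁} (hv : AEStronglyMeasurable v (volume.restrict (Icc 0 T)))
    (hvR : eLpNorm v p₁ (volume.restrict (Icc 0 T)) ≤ ENNReal.ofReal R)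
    {t h : ℝ} (ht : t ∈ Icc (0:ℝ) T) (hh0 : 0 < h) (hhT : h ≤ T) :
    ∃ s ∈ Icc (0:ℝ) T, |s - t| ≤ h ∧ ‖v s‖ ≤ (R + 1) * (2 / h) ^ (p₁.toReal)⁻¹ := by
  set κ : ℝ := (R + 1) * (2 / h) ^ (p₁.toReal)⁻¹ with hκdef
  have hc : (0:ℝ) < (2 / h) ^ (p₁.toReal)⁻¹ :=
    Real.rpow_pos_of_pos (by positivity) _
  have hκpos : 0 < κ := mul_pos (by linarith) hc
  set μ := volume.restrict (Icc (0:ℝ) T) with hμ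
  set B : Set ℝ := {x | ENNReal.ofReal κ ≤ (‖v x‖₊ : ℝ≥0∞)} with hB
  -- the bad set has measure < h
  have hBsmall : μ B < ENNReal.ofReal h := by
    rcases eq_or_ne p₁ ∞ with hp | hp
    · -- p₁ = ∞ : essentially bounded by R < κ
      have hκR : R < κ := by
        have h1 : (1:ℝ) ≤ (2 / h) ^ (p₁.toReal)⁻¹ := by rw [hp]; simp
        nlinarith
      have hae : ∀ᵐ x ∂μ, (‖v x‖₊ : ℝ≥0∞) ≤ ENNReal.ofReal R := by
        filter_upwards [ae_le_eLpNormEssSup (f := v) (μ := μ)] with x hx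
        exact hx.trans (by rw [← eLpNorm_exponent_top, ← hp]; exact hvR)
      have hnull : μ B = 0 := by
        refine measure_mono_null ?_ (ae_iff.1 hae)
        intro x hx
        simp only [mem_setOf_eq, not_le]
        exact lt_of_lt_of_le ((ENNReal.ofReal_lt_ofReal_iff hκpos).2 hκR) hx
      rw [hnull]; exact ENNReal.ofReal_pos.2 hh0
    · -- p₁ finite : Chebyshev
      have hq0 : p₁ ≠ 0 := by positivity
      have hqR : 0 < p₁.toReal := ENNReal.toReal_pos hq0 hp
      have hcheb := meas_ge_le_mul_pow_eLpNorm_enorm μ hq0 hp hv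
        (ε := ENNReal.ofReal κ) (ENNReal.ofReal_pos.2 hκpos).ne' (fun h => absurd h ENNReal.ofReal_ne_top)
      have hbound : μ B ≤ ENNReal.ofReal (κ⁻¹ ^ p₁.toReal * R ^ p₁.toReal) := by
        refine hcheb.trans ?_
        calc (ENNReal.ofReal κ)⁻¹ ^ p₁.toReal * eLpNorm v p₁ μ ^ p₁.toReal
            ≤ (ENNReal.ofReal κ)⁻¹ ^ p₁.toReal * (ENNReal.ofReal R) ^ p₁.toReal := by
              gcongr
          _ = ENNReal.ofReal (κ⁻¹ ^ p₁.toReal * R ^ p₁.toReal) := by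
              rw [← ENNReal.ofReal_inv_of_pos hκpos,
                ENNReal.ofReal_rpow_of_pos (inv_pos.2 hκpos),
                ENNReal.ofReal_rpow_of_nonneg hR hqR.le,
                ← ENNReal.ofReal_mul (by positivity)]
      refine lt_of_le_of_lt hbound ((ENNReal.ofReal_lt_ofReal_iff hh0).2 ?_)
      have hcq : ((2 / h : ℝ) ^ (p₁.toReal)⁻¹) ^ p₁.toReal = 2 / h :=
        Real.rpow_inv_rpow (by positivity) hqR.ne'
      have e1 : κ⁻¹ ^ p₁.toReal * R ^ p₁.toReal = (R / (R + 1)) ^ p₁.toReal * (h / 2) := by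
        rw [← Real.mul_rpow (by positivity) hR]
        have e2 : κ⁻¹ * R = (R / (R + 1)) * ((2 / h) ^ (p₁.toReal)⁻¹)⁻¹ := by
          rw [hκdef, mul_inv]; ring
        rw [e2, Real.mul_rpow (by positivity) (by positivity),
          Real.inv_rpow hc.le, hcq, inv_div]
      rw [e1]
      have hle1 : (R / (R + 1)) ^ p₁.toReal ≤ 1 :=
        Real.rpow_le_one (by positivity) (by rw [div_le_one (by linarith)]; linarith) hqR.le
      nlinarith
  -- the window
  set a : ℝ := if t + h ≤ T then t else T - h with ha
  have haW : Icc a (a + h) ⊆ Icc (0:ℝ) T := by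
    rw [ha]; split_ifs with hc'
    · exact Icc_subset_Icc ht.1 hc'
    · exact Icc_subset_Icc (by linarith) (by linarith)
  have hμW : μ (Icc a (a + h)) = ENNReal.ofReal h := by
    rw [hμ, Measure.restrict_apply' measurableSet_Icc,
      inter_eq_self_of_subset_left haW, Real.volume_Icc]
    congr 1; ring
  have hnear : ∀ s ∈ Icc a (a + h), |s - t| ≤ h := by
    intro s hs
    rw [abs_le]
    rw [ha] at hs; split_ifs at hs with hc'
    · constructor <;> [linarith [hs.1]; linarith [hs.2]]
    · push_neg at hc'
      have h1 := ht.2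
      constructor <;> [linarith [hs.1]; linarith [hs.2]]
  have : ¬ Icc a (a + h) ⊆ B := by
    intro hsub
    exact absurd (hμW ▸ measure_mono hsub) (by simp [hBsmall.not_ge])
  obtain ⟨s, hsW, hsB⟩ := not_subset.1 this
  refine ⟨s, haW hsW, hnear s hsW, ?_⟩
  have hlt : (‖v s‖₊ : ℝ≥0∞) < ENNReal.ofReal κ := by
    simpa [hB, not_le] using hsB
  have := (ENNReal.lt_ofReal_iff_toReal_lt ENNReal.coe_ne_top).1 hlt
  simpa using this.le

theorem const_algebra {θ M R α q : ℝ} {a b c x : ℝ} (hR : 0 ≤ R) (hb : 0 ≤ b)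
    (ha : 0 < a) (hc : 0 < c) (hx : 0 < x) :
    M * (R * (a * x) ^ α) ^ (1 - θ) * (b * (c / x) ^ q) ^ θ
      = M * (R * a ^ α) ^ (1 - θ) * (b * c ^ q) ^ θ * x ^ (α * (1 - θ) - q * θ) := by
  have e1 : (R * (a * x) ^ α) ^ (1 - θ)
      = (R * a ^ α) ^ (1 - θ) * x ^ (α * (1 - θ)) := by
    rw [Real.mul_rpow ha.le hx.le,
      show R * (a ^ α * x ^ α) = R * a ^ α * x ^ α by ring,
      Real.mul_rpow (mul_nonneg hR (Real.rpow_nonneg ha.le _))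
        (Real.rpow_nonneg hx.le _), ← Real.rpow_mul hx.le]
  have e2 : (b * (c / x) ^ q) ^ θ
      = (b * c ^ q) ^ θ * x ^ (-(q * θ)) := by
    rw [div_eq_mul_inv, Real.mul_rpow hc.le (inv_nonneg.2 hx.le),
      ← Real.rpow_neg_one x, ← Real.rpow_mul hx.le,
      show b * (c ^ q * x ^ (-1 * q)) = b * c ^ q * x ^ (-1 * q) by ring,
      Real.mul_rpow (mul_nonneg hb (Real.rpow_nonneg hc.le _))
        (Real.rpow_nonneg hx.le _), ← Real.rpow_mul hx.le]
    ring_nf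
  rw [e1, e2, show α * (1 - θ) - q * θ = α * (1 - θ) + -(q * θ) by ring,
    Real.rpow_add hx]
  ring

theorem pair_est {E₀ E E₁ : Type*}
    [NormedAddCommGroup E₀] [NormedSpace ℝ E₀] [CompleteSpace E₀]
    [NormedAddCommGroup E] [NormedSpace ℝ E]
    [NormedAddCommGroup E₁] [NormedSpace ℝ E₁]
    (i : E₁ →L[ℝ] E) (j : E →L[ℝ] E₀)
    {θ M : ℝ} (hθ : θ ∈ Set.Ioo (0:ℝ) 1) (hM : 0 ≤ M)
    (hinterp : ∀ u : E₁, ‖i u‖ ≤ M * ‖j (i u)‖ ^ (1 - θ) * ‖u‖ ^ θ)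
    {T R : ℝ} (hR : 0 ≤ R) {p₀ : ℝ≥0∞} (hp₀ : 1 ≤ p₀)
    (hα : 0 ≤ 1 - (p₀.toReal)⁻¹)
    {v : ℝ → E₁} {w' : ℝ → E₀} (hw : MemLp w' p₀ (volume.restrict (Icc 0 T)))
    (hwR : eLpNorm w' p₀ (volume.restrict (Icc 0 T)) ≤ ENNReal.ofReal R)
    (hlaw : ∀ t ∈ Icc (0:ℝ) T, j (i (v t)) = j (i (v 0)) + ∫ s in (0:ℝ)..t, w' s)
    {x y : ℝ} (hx : x ∈ Icc (0:ℝ) T) (hy : y ∈ Icc (0:ℝ) T)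
    {L P : ℝ} (hL : |x - y| ≤ L) (hP : ‖v x‖ + ‖v y‖ ≤ P) :
    ‖i (v x) - i (v y)‖ ≤
      M * (R * L ^ (1 - (p₀.toReal)⁻¹)) ^ (1 - θ) * P ^ θ := by
  obtain ⟨hθ0, hθ1⟩ := hθ
  set α := 1 - (p₀.toReal)⁻¹ with hαdef
  have hL0 : 0 ≤ L := le_trans (abs_nonneg _) hL
  have hP0 : 0 ≤ P := le_trans (by positivity) hP
  haveI : IsFiniteMeasure (volume.restrict (Icc (0:ℝ) T)) :=
    ⟨by rw [Measure.restrict_apply_univ]; exact measure_Icc_lt_top⟩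
  have hInt : Integrable w' (volume.restrict (Icc 0 T)) := hw.integrable hp₀
  have hII : ∀ z ∈ Icc (0:ℝ) T, IntervalIntegrable w' volume 0 z := by
    intro z hz
    rw [intervalIntegrable_iff_integrableOn_Ioc_of_le hz.1]
    have hsub : Ioc 0 z ⊆ Icc (0:ℝ) T := fun τ hτ => ⟨hτ.1.le, hτ.2.trans hz.2⟩
    exact hInt.mono_measure (Measure.restrict_mono hsub le_rfl)
  -- Hölder continuity of t ↦ j (i (v t))
  have hg : ‖j (i (v x)) - j (i (v y))‖ ≤ R * L ^ α := by
    have main : ∀ z ∈ Icc (0:ℝ) T, ∀ z' ∈ Icc (0:ℝ) T, z' ≤ z → z - z' ≤ L →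
        ‖j (i (v z)) - j (i (v z'))‖ ≤ R * L ^ α := by
      intro z hz z' hz' hle hdiff
      have heq : j (i (v z)) - j (i (v z')) = ∫ τ in z'..z, w' τ := by
        rw [hlaw z hz, hlaw z' hz', add_sub_add_left_eq_sub,
          intervalIntegral.integral_interval_sub_left (hII z hz) (hII z' hz')]
      rw [heq]
      calc ‖∫ τ in z'..z, w' τ‖ ≤ R * (z - z') ^ α :=
            holder_of_deriv hR hp₀ hα hw hwR hz' hz hle
        _ ≤ R * L ^ α := by
            apply mul_le_mul_of_nonneg_left _ hR
            exact Real.rpow_le_rpow (by linarith) hdiff hα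
    rcases le_total y x with hle | hle
    · exact main x hx y hy hle (by rw [abs_of_nonneg (by linarith)] at hL; linarith)
    · rw [norm_sub_rev]
      exact main y hy x hx hle (by rw [abs_of_nonpos (by linarith)] at hL; linarith)
  calc ‖i (v x) - i (v y)‖ = ‖i (v x - v y)‖ := by rw [map_sub]
    _ ≤ M * ‖j (i (v x - v y))‖ ^ (1 - θ) * ‖v x - v y‖ ^ θ := hinterp _
    _ ≤ M * (R * L ^ α) ^ (1 - θ) * P ^ θ := by
        have h1 : ‖j (i (v x - v y))‖ ≤ R * L ^ α := by
          rw [map_sub, map_sub]; exact hg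
        have h2 : ‖v x - v y‖ ≤ P := (norm_sub_le _ _).trans hP
        apply mul_le_mul
        · exact mul_le_mul_of_nonneg_left
            (Real.rpow_le_rpow (norm_nonneg _) h1 (by linarith)) hM
        · exact Real.rpow_le_rpow (norm_nonneg _) h2 hθ0.le
        · exact Real.rpow_nonneg (norm_nonneg _) _
        · exact mul_nonneg hM (Real.rpow_nonneg
            (mul_nonneg hR (Real.rpow_nonneg hL0 _)) _)

theorem g_holder {E₀ E E₁ : Type*}
    [NormedAddCommGroup E₀] [NormedSpace ℝ E₀] [CompleteSpace E₀]
    [NormedAddCommGroup E] [NormedSpace ℝ E]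
    [NormedAddCommGroup E₁] [NormedSpace ℝ E₁]
    (i : E₁ →L[ℝ] E) (j : E →L[ℝ] E₀)
    {T R : ℝ} (hR : 0 ≤ R) {p₀ : ℝ≥0∞} (hp₀ : 1 ≤ p₀)
    (hα : 0 ≤ 1 - (p₀.toReal)⁻¹)
    {v : ℝ → E₁} {w' : ℝ → E₀} (hw : MemLp w' p₀ (volume.restrict (Icc 0 T)))
    (hwR : eLpNorm w' p₀ (volume.restrict (Icc 0 T)) ≤ ENNReal.ofReal R)
    (hlaw : ∀ t ∈ Icc (0:ℝ) T, j (i (v t)) = j (i (v 0)) + ∫ s in (0:ℝ)..t, w' s)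
    {x y : ℝ} (hx : x ∈ Icc (0:ℝ) T) (hy : y ∈ Icc (0:ℝ) T)
    {L : ℝ} (hL : |x - y| ≤ L) :
    ‖j (i (v x)) - j (i (v y))‖ ≤ R * L ^ (1 - (p₀.toReal)⁻¹) := by
  set α := 1 - (p₀.toReal)⁻¹ with hαdef
  haveI : IsFiniteMeasure (volume.restrict (Icc (0:ℝ) T)) :=
    ⟨by rw [Measure.restrict_apply_univ]; exact measure_Icc_lt_top⟩
  have hInt : Integrable w' (volume.restrict (Icc 0 T)) := hw.integrable hp₀
  have hII : ∀ z ∈ Icc (0:ℝ) T, IntervalIntegrable w' volume 0 z := by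
    intro z hz
    rw [intervalIntegrable_iff_integrableOn_Ioc_of_le hz.1]
    have hsub : Ioc 0 z ⊆ Icc (0:ℝ) T := fun τ hτ => ⟨hτ.1.le, hτ.2.trans hz.2⟩
    exact hInt.mono_measure (Measure.restrict_mono hsub le_rfl)
  have main : ∀ z ∈ Icc (0:ℝ) T, ∀ z' ∈ Icc (0:ℝ) T, z' ≤ z → z - z' ≤ L →
      ‖j (i (v z)) - j (i (v z'))‖ ≤ R * L ^ α := by
    intro z hz z' hz' hle hdiff
    have heq : j (i (v z)) - j (i (v z')) = ∫ τ in z'..z, w' τ := by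
      rw [hlaw z hz, hlaw z' hz', add_sub_add_left_eq_sub,
        intervalIntegral.integral_interval_sub_left (hII z hz) (hII z' hz')]
    rw [heq]
    calc ‖∫ τ in z'..z, w' τ‖ ≤ R * (z - z') ^ α :=
          holder_of_deriv hR hp₀ hα hw hwR hz' hz hle
      _ ≤ R * L ^ α := by
          apply mul_le_mul_of_nonneg_left _ hR
          exact Real.rpow_le_rpow (by linarith) hdiff hα
  rcases le_total y x with hle | hle
  · exact main x hx y hy hle (by rw [abs_of_nonneg (by linarith)] at hL; linarith)
  · rw [norm_sub_rev]
    exact main y hy x hx hle (by rw [abs_of_nonpos (by linarith)] at hL; linarith)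

noncomputable def simonC (M θ R α q δ : ℝ) : ℝ :=
  M * (R * 2 ^ α) ^ (1 - θ) * (2 * (R + 1) * 4 ^ q) ^ θ / (1 - (1 / 2 : ℝ) ^ δ)

theorem simonC_nonneg {M θ R α q δ : ℝ} (hM : 0 ≤ M) (hR : 0 ≤ R) (hδ : 0 < δ) :
    0 ≤ simonC M θ R α q δ := by
  have hr1 : ((1:ℝ)/2) ^ δ < 1 := Real.rpow_lt_one (by norm_num) (by norm_num) hδ
  apply div_nonneg _ (by linarith)
  have h1 : (0:ℝ) ≤ R * 2 ^ α := mul_nonneg hR (Real.rpow_nonneg (by norm_num) _)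
  have h2 : (0:ℝ) ≤ 2 * (R + 1) * 4 ^ q := by
    have := Real.rpow_nonneg (by norm_num : (0:ℝ) ≤ 4) q
    nlinarith
  exact mul_nonneg (mul_nonneg hM (Real.rpow_nonneg h1 _)) (Real.rpow_nonneg h2 _)

theorem good_approx {E₀ E E₁ : Type*}
    [NormedAddCommGroup E₀] [NormedSpace ℝ E₀] [CompleteSpace E₀]
    [NormedAddCommGroup E] [NormedSpace ℝ E] [CompleteSpace E]
    [NormedAddCommGroup E₁] [NormedSpace ℝ E₁]
    (i : E₁ →L[ℝ] E) (j : E →L[ℝ] E₀) (hj : Function.Injective j)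
    {θ M : ℝ} (hθ : θ ∈ Set.Ioo (0:ℝ) 1) (hM : 0 ≤ M)
    (hinterp : ∀ u : E₁, ‖i u‖ ≤ M * ‖j (i u)‖ ^ (1 - θ) * ‖u‖ ^ θ)
    {T R : ℝ} (hR : 0 ≤ R) {p₀ p₁ : ℝ≥0∞} (hp₀ : 1 ≤ p₀) (hp₁ : 1 ≤ p₁)
    (hα : 0 < 1 - (p₀.toReal)⁻¹)
    (hδ : 0 < (1 - θ) * (1 - (p₀.toReal)⁻¹) - θ * (p₁.toReal)⁻¹)
    {v : ℝ → E₁} (hv : AEStronglyMeasurable v (volume.restrict (Icc 0 T)))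
    (hvR : eLpNorm v p₁ (volume.restrict (Icc 0 T)) ≤ ENNReal.ofReal R)
    {w' : ℝ → E₀} (hw : MemLp w' p₀ (volume.restrict (Icc 0 T)))
    (hwR : eLpNorm w' p₀ (volume.restrict (Icc 0 T)) ≤ ENNReal.ofReal R)
    (hlaw : ∀ t ∈ Icc (0:ℝ) T, j (i (v t)) = j (i (v 0)) + ∫ s in (0:ℝ)..t, w' s)
    {t h : ℝ} (ht : t ∈ Icc (0:ℝ) T) (hh0 : 0 < h) (hhT : h ≤ T) :
    ∃ s ∈ Icc (0:ℝ) T, |s - t| ≤ h ∧ ‖v s‖ ≤ (R + 1) * (2 / h) ^ (p₁.toReal)⁻¹ ∧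
      ‖i (v t) - i (v s)‖ ≤
        simonC M θ R (1 - (p₀.toReal)⁻¹) ((p₁.toReal)⁻¹)
            ((1 - θ) * (1 - (p₀.toReal)⁻¹) - θ * (p₁.toReal)⁻¹) *
          h ^ ((1 - θ) * (1 - (p₀.toReal)⁻¹) - θ * (p₁.toReal)⁻¹) := by
  obtain ⟨hθ0, hθ1⟩ := hθ
  set α := 1 - (p₀.toReal)⁻¹ with hαdef
  set q := (p₁.toReal)⁻¹ with hqdef
  set δ := (1 - θ) * α - θ * q with hδdef
  have hq0 : 0 ≤ q := inv_nonneg.2 ENNReal.toReal_nonneg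
  set r : ℝ := ((1:ℝ)/2) ^ δ with hrdef
  have hr0 : 0 ≤ r := Real.rpow_nonneg (by norm_num) _
  have hr1 : r < 1 := Real.rpow_lt_one (by norm_num) (by norm_num) hδ
  set A : ℝ := M * (R * 2 ^ α) ^ (1 - θ) * (2 * (R + 1) * 4 ^ q) ^ θ with hAdef
  -- the geometric scales
  set σ : ℕ → ℝ := fun n => h * ((1:ℝ)/2) ^ n with hσdef
  have hσpos : ∀ n, 0 < σ n := fun n => by positivity
  have hσT : ∀ n, σ n ≤ T := by
    intro n
    have h1 : ((1:ℝ)/2) ^ n ≤ 1 := pow_le_one₀ (by norm_num) (by norm_num)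
    calc σ n = h * ((1:ℝ)/2) ^ n := rfl
      _ ≤ h * 1 := by apply mul_le_mul_of_nonneg_left h1 hh0.le
      _ ≤ T := by linarith
  have hσsucc : ∀ n, σ (n + 1) = σ n / 2 := by
    intro n; simp only [hσdef, pow_succ]; ring
  have hσe : ∀ (e : ℝ) (n : ℕ), (σ n) ^ e = h ^ e * (((1:ℝ)/2) ^ e) ^ n := by
    intro e n
    rw [hσdef]
    rw [Real.mul_rpow hh0.le (by positivity), ← Real.rpow_natCast ((1:ℝ)/2) n,
      ← Real.rpow_mul (by norm_num), mul_comm (n:ℝ) e,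
      Real.rpow_mul (by norm_num), Real.rpow_natCast]
  -- good points at every scale
  choose seq hseq1 hseq2 hseq3 using fun n =>
    exists_good_point hR hp₁ hv hvR ht (hσpos n) (hσT n)
  set f : ℕ → E := fun n => i (v (seq n)) with hfdef
  -- geometric estimate on consecutive terms
  have hstep : ∀ n, dist (f n) (f (n + 1)) ≤ A * h ^ δ * r ^ n := by
    intro n
    have e1 : |seq n - seq (n + 1)| ≤ 2 * σ n := by
      calc |seq n - seq (n + 1)| ≤ |seq n - t| + |t - seq (n + 1)| := abs_sub_le _ _ _
        _ = |seq n - t| + |seq (n + 1) - t| := by rw [abs_sub_comm t]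
        _ ≤ σ n + σ (n + 1) := add_le_add (hseq2 n) (hseq2 (n + 1))
        _ ≤ 2 * σ n := by rw [hσsucc n]; linarith [hσpos n]
    have hmono : ((2:ℝ) / σ n) ^ q ≤ ((4:ℝ) / σ n) ^ q := by
      apply Real.rpow_le_rpow (by positivity) _ hq0
      exact div_le_div_of_nonneg_right (by norm_num) (hσpos n).le
    have e2 : ‖v (seq n)‖ + ‖v (seq (n + 1))‖ ≤ 2 * ((R + 1) * (4 / σ n) ^ q) := by
      have k1 : ‖v (seq n)‖ ≤ (R + 1) * (4 / σ n) ^ q :=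
        (hseq3 n).trans (mul_le_mul_of_nonneg_left hmono (by linarith))
      have k2 : ‖v (seq (n + 1))‖ ≤ (R + 1) * (4 / σ n) ^ q := by
        refine (hseq3 (n + 1)).trans (le_of_eq ?_)
        rw [hσsucc n, div_div_eq_mul_div]
        norm_num
        exact Or.inl rfl
      linarith
    have e3 := pair_est i j ⟨hθ0, hθ1⟩ hM hinterp hR hp₀ hα.le hw hwR hlaw
      (hseq1 n) (hseq1 (n + 1)) e1 e2
    rw [dist_eq_norm]
    calc ‖f n - f (n + 1)‖
        ≤ M * (R * (2 * σ n) ^ α) ^ (1 - θ) * (2 * ((R + 1) * (4 / σ n) ^ q)) ^ θ := e3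
      _ = M * (R * 2 ^ α) ^ (1 - θ) * (2 * (R + 1) * 4 ^ q) ^ θ * (σ n) ^ (α * (1 - θ) - q * θ) := by
          rw [show (2 * ((R + 1) * (4 / σ n) ^ q)) = 2 * (R + 1) * (4 / σ n) ^ q by ring,
            const_algebra hR (by positivity) two_pos (by norm_num) (hσpos n)]
      _ = A * h ^ δ * r ^ n := by
          rw [show α * (1 - θ) - q * θ = δ by rw [hδdef]; ring,
            hσe δ n, ← hrdef, hAdef]; ring
  -- the sequence is Cauchy; identify its limit
  have hA0 : 0 ≤ A := by
    have h1 : (0:ℝ) ≤ R * 2 ^ α := mul_nonneg hR (Real.rpow_nonneg (by norm_num) _)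
    have h2 : (0:ℝ) ≤ 2 * (R + 1) * 4 ^ q := by positivity
    exact mul_nonneg (mul_nonneg hM (Real.rpow_nonneg h1 _)) (Real.rpow_nonneg h2 _)
  have hcauchy : CauchySeq f := cauchySeq_of_le_geometric r (A * h ^ δ) hr1 hstep
  obtain ⟨e, he⟩ := cauchySeq_tendsto_of_complete hcauchy
  have hje : Filter.Tendsto (fun n => j (f n)) Filter.atTop (nhds (j e)) :=
    (j.continuous.tendsto e).comp he
  have hjt : Filter.Tendsto (fun n => j (f n)) Filter.atTop (nhds (j (i (v t)))) := by
    rw [← tendsto_sub_nhds_zero_iff]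
    have hb : ∀ n, ‖j (f n) - j (i (v t))‖ ≤ R * h ^ α * (((1:ℝ)/2) ^ α) ^ n := by
      intro n
      have := g_holder i j hR hp₀ hα.le hw hwR hlaw (hseq1 n) ht (hseq2 n)
      calc ‖j (f n) - j (i (v t))‖ ≤ R * (σ n) ^ α := this
        _ = R * h ^ α * (((1:ℝ)/2) ^ α) ^ n := by rw [hσe α n]; ring
    apply squeeze_zero_norm hb
    have hlt : ((1:ℝ)/2) ^ α < 1 := Real.rpow_lt_one (by norm_num) (by norm_num) hα
    have hge : (0:ℝ) ≤ ((1:ℝ)/2) ^ α := Real.rpow_nonneg (by norm_num) _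
    have := tendsto_pow_atTop_nhds_zero_of_lt_one hge hlt
    simpa using this.const_mul (R * h ^ α)
  have heq : e = i (v t) := hj (tendsto_nhds_unique hje hjt)
  refine ⟨seq 0, hseq1 0, ?_, ?_, ?_⟩
  · have := hseq2 0
    simpa [hσdef] using this
  · have := hseq3 0
    simpa [hσdef] using this
  · have hd : dist (f 0) (i (v t)) ≤ A * h ^ δ / (1 - r) :=
      dist_le_of_le_geometric_of_tendsto₀ r (A * h ^ δ) hr1 hstep (heq ▸ he)
    rw [norm_sub_rev, ← dist_eq_norm]
    calc dist (f 0) (i (v t)) ≤ A * h ^ δ / (1 - r) := hd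
      _ = simonC M θ R α q δ * h ^ δ := by
          rw [simonC, ← hrdef, ← hAdef]; ring

/-- **Simon's compactness lemma (Lemma 2.1 of the paper).**
Let `E₁ ⊂ E ⊂ E₀` be real Banach spaces, the embeddings realised by injective
continuous linear maps `i : E₁ →L E` and `j : E →L E₀` with `j ∘ i` compact,
and suppose the interpolation inequality
`‖i u‖ ≤ M ‖j (i u)‖^{1-θ} ‖u‖^θ` holds with `θ ∈ (0,1)`.  Let `T > 0` and
`p₀, p₁ ∈ [1, ∞]` with `1 - θ > (1-θ)/p₀ + θ/p₁`.  If `V` is a set of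
functions `v : [0,T] → E₁` bounded by `R` in `L^{p₁}(0,T;E₁)` whose
distributional derivatives (in `E₀`) are bounded by `R` in `L^{p₀}(0,T;E₀)`,
then `{t ↦ i (v t) : v ∈ V}` is relatively compact (totally bounded) in
`C([0,T];E)` with the supremum norm (i.e. for the uniform-convergence
uniformity on functions `[0,T] → E`). -/
theorem simon_compactness
    {E₀ E E₁ : Type*}
    [NormedAddCommGroup E₀] [NormedSpace ℝ E₀] [CompleteSpace E₀]
    [NormedAddCommGroup E] [NormedSpace ℝ E] [CompleteSpace E]
    [NormedAddCommGroup E₁] [NormedSpace ℝ E₁] [CompleteSpace E₁]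
    (i : E₁ →L[ℝ] E) (j : E →L[ℝ] E₀)
    (hi : Function.Injective i) (hj : Function.Injective j)
    (hcompact : IsCompactOperator fun u : E₁ => j (i u))
    (θ M : ℝ) (hθ : θ ∈ Set.Ioo (0:ℝ) 1) (hM : 0 ≤ M)
    (hinterp : ∀ u : E₁, ‖i u‖ ≤ M * ‖j (i u)‖ ^ (1 - θ) * ‖u‖ ^ θ)
    (T : ℝ) (hT : 0 < T) (p₀ p₁ : ℝ≥0∞) (hp₀ : 1 ≤ p₀) (hp₁ : 1 ≤ p₁)
    (hpθ : (1 - θ) * (p₀.toReal)⁻¹ + θ * (p₁.toReal)⁻¹ < 1 - θ)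
    (R : ℝ) (hR : 0 ≤ R) (V : Set (ℝ → E₁))
    (hV : ∀ v ∈ V,
      (MemLp v p₁ (volume.restrict (Icc (0:ℝ) T)) ∧
        eLpNorm v p₁ (volume.restrict (Icc (0:ℝ) T)) ≤ ENNReal.ofReal R) ∧
      ∃ w' : ℝ → E₀,
        MemLp w' p₀ (volume.restrict (Icc (0:ℝ) T)) ∧
        eLpNorm w' p₀ (volume.restrict (Icc (0:ℝ) T)) ≤ ENNReal.ofReal R ∧
        ∀ t ∈ Icc (0:ℝ) T,
          j (i (v t)) = j (i (v 0)) + ∫ s in (0:ℝ)..t, w' s) :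
    TotallyBounded
      ((fun v : ℝ → E₁ =>
          UniformFun.ofFun (fun t : Icc (0:ℝ) T => i (v ↑t))) '' V) := by
  obtain ⟨hθ0, hθ1⟩ := hθ
  have h1θ : (0:ℝ) < 1 - θ := by linarith
  set α : ℝ := 1 - (p₀.toReal)⁻¹ with hαdef
  set q : ℝ := (p₁.toReal)⁻¹ with hqdef
  set δ : ℝ := (1 - θ) * α - θ * q with hδdef
  have hq0 : 0 ≤ q := inv_nonneg.2 ENNReal.toReal_nonneg
  have hx0 : 0 ≤ (p₀.toReal)⁻¹ := inv_nonneg.2 ENNReal.toReal_nonneg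
  have hθq : 0 ≤ θ * q := mul_nonneg hθ0.le hq0
  have hx1 : (p₀.toReal)⁻¹ < 1 := by
    have h2 : (1 - θ) * (p₀.toReal)⁻¹ < (1 - θ) * 1 := by rw [mul_one]; linarith
    exact (mul_lt_mul_iff_right₀ h1θ).1 h2
  have hα : 0 < α := by rw [hαdef]; linarith
  have hδ : 0 < δ := by
    have : δ = (1 - θ) - ((1 - θ) * (p₀.toReal)⁻¹ + θ * q) := by
      rw [hδdef, hαdef]; ring
    rw [this]; linarith
  set C₁ : ℝ := simonC M θ R α q δ with hC₁def
  have hC₁ : 0 ≤ C₁ := simonC_nonneg hM hR hδ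
  set B : ℝ := M * (R * 3 ^ α) ^ (1 - θ) * (2 * (R + 1) * 2 ^ q) ^ θ with hBdef
  have hB0 : 0 ≤ B := by
    have h1 : (0:ℝ) ≤ R * 3 ^ α := mul_nonneg hR (Real.rpow_nonneg (by norm_num) _)
    have h2 : (0:ℝ) ≤ 2 * (R + 1) * 2 ^ q := by positivity
    exact mul_nonneg (mul_nonneg hM (Real.rpow_nonneg h1 _)) (Real.rpow_nonneg h2 _)
  apply totallyBounded_of_near
  intro W hW
  obtain ⟨U, hU, hUW⟩ :=
    (UniformFun.hasBasis_uniformity (Icc (0:ℝ) T) E).mem_iff.1 hW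
  obtain ⟨ε, hε, hεU⟩ := Metric.mem_uniformity_dist.1 hU
  -- choose the mesh size
  set D : ℝ := C₁ + B + 1 with hDdef
  have hD0 : 0 < D := by positivity
  set d' : ℝ := min T ((ε / D) ^ δ⁻¹) with hd'def
  have hd'0 : 0 < d' := lt_min hT (Real.rpow_pos_of_pos (div_pos hε hD0) _)
  have hd'T : d' ≤ T := min_le_left _ _
  have hkey : (C₁ + B) * d' ^ δ < ε := by
    have h1 : d' ^ δ ≤ ε / D := by
      calc d' ^ δ ≤ ((ε / D) ^ δ⁻¹) ^ δ :=
            Real.rpow_le_rpow hd'0.le (min_le_right _ _) hδ.le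
        _ = ε / D := Real.rpow_inv_rpow (div_pos hε hD0).le hδ.ne'
    have h2 : (C₁ + B) / D < 1 := by
      rw [div_lt_one hD0, hDdef]; linarith
    calc (C₁ + B) * d' ^ δ ≤ (C₁ + B) * (ε / D) :=
          mul_le_mul_of_nonneg_left h1 (add_nonneg hC₁ hB0)
      _ = ε * ((C₁ + B) / D) := by ring
      _ < ε * 1 := mul_lt_mul_of_pos_left h2 hε
      _ = ε := mul_one ε
  -- the grid
  obtain ⟨n₀, hn₀⟩ := exists_nat_ge (T / d')
  set N : ℕ := max n₀ 1 with hNdef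
  have hN1 : 1 ≤ N := le_max_right _ _
  have hNpos : (0:ℝ) < N := by exact_mod_cast Nat.lt_of_lt_of_le Nat.zero_lt_one hN1
  set d : ℝ := T / N with hddef
  have hd0 : 0 < d := div_pos hT hNpos
  have hdd' : d ≤ d' := by
    rw [hddef, div_le_iff₀ hNpos]
    have : T / d' ≤ (N : ℝ) := le_trans hn₀ (by exact_mod_cast Nat.le_max_left n₀ 1)
    calc T = T / d' * d' := by field_simp
      _ ≤ (N : ℝ) * d' := mul_le_mul_of_nonneg_right this hd'0.le
      _ = d' * N := mul_comm _ _
  have hdT : d ≤ T := hdd'.trans hd'T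
  have hdN : d * N = T := by rw [hddef]; field_simp
  -- the grid map
  have hφlt : ∀ x : Icc (0:ℝ) T, ⌊(x : ℝ) / d⌋₊ < N + 1 := by
    intro x
    have hx : (x : ℝ) / d ≤ N := by
      rw [div_le_iff₀ hd0]
      calc (x : ℝ) ≤ T := x.2.2
        _ = d * N := hdN.symm
        _ = N * d := mul_comm _ _
    exact Nat.lt_succ_of_le (le_trans (Nat.floor_le_floor hx) (by simp))
  set φ : Icc (0:ℝ) T → Fin (N + 1) := fun x => ⟨⌊(x : ℝ) / d⌋₊, hφlt x⟩ with hφdef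
  have hφnear : ∀ x : Icc (0:ℝ) T, |(x : ℝ) - d * (φ x : ℕ)| ≤ d := by
    intro x
    have hx0' : 0 ≤ (x : ℝ) / d := div_nonneg x.2.1 hd0.le
    have hmval : ((φ x : ℕ) : ℝ) = ((⌊(x : ℝ) / d⌋₊ : ℕ) : ℝ) := rfl
    have h1 : d * ((φ x : ℕ) : ℝ) ≤ (x : ℝ) := by
      rw [hmval, mul_comm]
      exact (le_div_iff₀ hd0).1 (Nat.floor_le hx0')
    have h2 : (x : ℝ) < d * ((φ x : ℕ) : ℝ) + d := by
      have hfu : (x : ℝ) / d < (⌊(x : ℝ) / d⌋₊ : ℝ) + 1 := Nat.lt_floor_add_one _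
      have := (div_lt_iff₀ hd0).1 hfu
      rw [hmval]; nlinarith
    rw [abs_le]
    exact ⟨by linarith, by linarith⟩
  -- the totally bounded value set
  set κ : ℝ := (R + 1) * (2 / d) ^ q with hκdef
  have hκ0 : 0 ≤ κ := by positivity
  set A : Set E := i '' Metric.closedBall 0 κ with hAdef
  have hAtb : TotallyBounded A :=
    totallyBounded_image_interp i j hcompact ⟨hθ0, hθ1⟩ hM hinterp hκ0
  refine ⟨{f : Icc (0:ℝ) T →ᵤ E |
      ∃ F : Fin (N + 1) → E, (∀ k, F k ∈ A) ∧
        f = UniformFun.ofFun (fun t => F (φ t))},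
    totallyBounded_uniformFun_comp φ hAtb, ?_⟩
  rintro x ⟨v, hvV, rfl⟩
  obtain ⟨⟨hvMem, hvRb⟩, w', hw, hwR, hlaw⟩ := hV v hvV
  -- grid points
  have hτmem : ∀ k : Fin (N + 1), d * (k : ℕ) ∈ Icc (0:ℝ) T := by
    intro k
    constructor
    · positivity
    · calc d * ((k : ℕ) : ℝ) ≤ d * N := by
            apply mul_le_mul_of_nonneg_left _ hd0.le
            exact_mod_cast Fin.is_le k
        _ = T := hdN
  choose s hs1 hs2 hs3 hs4 using fun k : Fin (N + 1) =>
    good_approx i j hj ⟨hθ0, hθ1⟩ hM hinterp hR hp₀ hp₁ hα hδ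
      hvMem.1 hvRb hw hwR hlaw (hτmem k) hd0 hdT
  refine ⟨UniformFun.ofFun (fun t => i (v (s (φ t)))),
    ⟨fun k => i (v (s k)), fun k => ⟨v (s k), by
      simpa [Metric.mem_closedBall, dist_eq_norm] using hs3 k, rfl⟩, rfl⟩,
    hUW ?_⟩
  intro x
  apply hεU
  -- the main estimate : dist (i (v x)) (i (v (s (φ x)))) < ε
  set t : ℝ := (x : ℝ) with htdef
  have htmem : t ∈ Icc (0:ℝ) T := x.2
  set k : Fin (N + 1) := φ x with hkdef
  -- a good point for t itself
  obtain ⟨st, hst1, hst2, hst3, hst4⟩ :=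
    good_approx i j hj ⟨hθ0, hθ1⟩ hM hinterp hR hp₀ hp₁ hα hδ
      hvMem.1 hvRb hw hwR hlaw htmem hd0 hdT
  -- distance between the two good points
  have hmid : ‖i (v st) - i (v (s k))‖ ≤ B * d ^ δ := by
    have hLbound : |st - s k| ≤ 3 * d := by
      calc |st - s k| ≤ |st - t| + |t - s k| := abs_sub_le _ _ _
        _ ≤ |st - t| + (|t - d * (k : ℕ)| + |d * (k : ℕ) - s k|) := by
            have := abs_sub_le t (d * (k : ℕ)) (s k)
            linarith
        _ ≤ d + (d + d) := by
            have h1 := hφnear x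
            have h2 := hs2 k
            rw [abs_sub_comm (d * ((k : ℕ) : ℝ))] at *
            linarith [hst2]
        _ = 3 * d := by ring
    have hPbound : ‖v st‖ + ‖v (s k)‖ ≤ 2 * ((R + 1) * (2 / d) ^ q) := by
      have := hst3
      have := hs3 k
      linarith
    calc ‖i (v st) - i (v (s k))‖
        ≤ M * (R * (3 * d) ^ α) ^ (1 - θ) * (2 * ((R + 1) * (2 / d) ^ q)) ^ θ :=
          pair_est i j ⟨hθ0, hθ1⟩ hM hinterp hR hp₀ hα.le hw hwR hlaw
            hst1 (hs1 k) hLbound hPbound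
      _ = B * d ^ δ := by
          rw [show (2 * ((R + 1) * (2 / d) ^ q)) = 2 * (R + 1) * (2 / d) ^ q by ring,
            const_algebra hR (by positivity) (by norm_num) (by norm_num) hd0,
            hBdef, show α * (1 - θ) - q * θ = δ by rw [hδdef]; ring]
  have hfinal : dist (i (v t)) (i (v (s k))) ≤ (C₁ + B) * d ^ δ := by
    calc dist (i (v t)) (i (v (s k)))
        ≤ dist (i (v t)) (i (v st)) + dist (i (v st)) (i (v (s k))) := dist_triangle _ _ _
      _ ≤ C₁ * d ^ δ + B * d ^ δ := by
          apply add_le_add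
          · rw [dist_eq_norm]; exact hst4
          · rw [dist_eq_norm]; exact hmid
      _ = (C₁ + B) * d ^ δ := by ring
  calc dist (i (v t)) (i (v (s k)))
      ≤ (C₁ + B) * d ^ δ := hfinal
    _ ≤ (C₁ + B) * d' ^ δ := by
        apply mul_le_mul_of_nonneg_left
          (Real.rpow_le_rpow hd0.le hdd' hδ.le) (add_nonneg hC₁ hB0)
    _ < ε := hkey
end
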